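/- (Gap product formula.) For all positive integers 1 ≤ M ≤ N, Σ_{σ,τ ∈ Σ_{N,M}} 2^{⟨σ,τ⟩} = Σ_{ℓ=0}^{M} Σ_{1 ≤ j_1 < ⋯ < j_ℓ ≤ M} Σ_{1 ≤ i_1 < ⋯ < i_ℓ ≤ N} Π_{k=1}^{ℓ+1} binom(i_k − i_{k−1} − 1, j_k − j_{k−1} − 1)², with the boundary convention i_0 = j_0 = 0, i_{ℓ+1} = N+1, j_{ℓ+1} = M+1, and with binom(m,r) := 0 whenever r < 0 or r > m. -/

import Mathlib

open Classical in
/-- `Σ_{σ,τ ∈ Σ_{N,M}} 2^{⟨σ,τ⟩}`, where `Σ_{N,M}` is the set of strictly increasing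
maps `Fin M → Fin N` and `⟨σ,τ⟩ = #{j : σ j = τ j}` is the overlap. -/
noncomputable def overlapSum (N M : ℕ) : ℕ :=
  ∑ σ : Fin M → Fin N, ∑ τ : Fin M → Fin N,
    if StrictMono σ ∧ StrictMono τ then
      2 ^ (Finset.univ.filter fun j => σ j = τ j).card
    else 0

/-- The list `0, s_1 < s_2 < ⋯ , top + 1` of boundary points associated to a finite set
`S ⊆ {1,…,top}`. -/
def sortedPts (S : Finset ℕ) (top : ℕ) : List ℕ :=
  (0 :: S.sort (· ≤ ·)) ++ [top + 1]

/-- `Π_{k=1}^{ℓ+1} binom(i_k - i_{k-1} - 1, j_k - j_{k-1} - 1)²` with the boundary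
convention `i_0 = j_0 = 0`, `i_{ℓ+1} = N + 1`, `j_{ℓ+1} = M + 1` (and `binom(m,r) = 0`
for `r > m`, as for `Nat.choose`). -/
def gapProd (I J : Finset ℕ) (N M ℓ : ℕ) : ℕ :=
  ∏ k ∈ Finset.range (ℓ + 1),
    (Nat.choose ((sortedPts I N).getD (k + 1) 0 - (sortedPts I N).getD k 0 - 1)
      ((sortedPts J M).getD (k + 1) 0 - (sortedPts J M).getD k 0 - 1)) ^ 2


open Finset

lemma sort_max_eq (s : Finset ℕ) (hs : s.Nonempty) :
    s.sort (· ≤ ·) = (s.erase (s.max' hs)).sort (· ≤ ·) ++ [s.max' hs] := by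
  refine (fun hp h1 h2 => List.Perm.eq_of_pairwise' (r := (· ≤ ·)) h1 h2 hp) ?_ ?_ ?_
  · rw [← Multiset.coe_eq_coe]
    have hm := Multiset.cons_erase (Finset.max'_mem s hs : s.max' hs ∈ s.val)
    show (↑(s.sort (· ≤ ·)) : Multiset ℕ) = ((((s.erase (s.max' hs)).sort (· ≤ ·) : List ℕ) : Multiset ℕ) + ([s.max' hs] : List ℕ))
    rw [Finset.sort_eq, Finset.sort_eq, Finset.erase_val, add_comm]
    show s.val = {s.max' hs} + s.val.erase (s.max' hs)
    rw [Multiset.singleton_add, hm]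
  · exact Finset.pairwise_sort _ _
  · rw [List.pairwise_append]
    refine ⟨Finset.pairwise_sort _ _, by simp, ?_⟩
    intro x hx y hy
    simp only [List.mem_singleton] at hy
    subst hy
    rw [Finset.mem_sort] at hx
    exact Finset.le_max' s x (Finset.mem_of_mem_erase hx)

lemma sort_getD_mem (s : Finset ℕ) (k : ℕ) (hk : k < s.card) :
    (s.sort (· ≤ ·)).getD k 0 ∈ s := by
  have hlen : k < (s.sort (· ≤ ·)).length := by rwa [Finset.length_sort]
  rw [List.getD_eq_getElem _ _ hlen]
  exact (Finset.mem_sort _).1 (List.getElem_mem _)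

lemma sort_getD_last (s : Finset ℕ) (hs : s.Nonempty) {ℓ : ℕ} (hc : s.card = ℓ + 1) :
    (s.sort (· ≤ ·)).getD ℓ 0 = s.max' hs := by
  rw [sort_max_eq s hs]
  have hlen : ((s.erase (s.max' hs)).sort (· ≤ ·)).length = ℓ := by
    simp [Finset.card_erase_of_mem (s.max'_mem hs), hc]
  rw [List.getD_append_right _ _ _ _ hlen.le, hlen]
  simp

lemma sort_getD_prefix (s : Finset ℕ) (hs : s.Nonempty) {k : ℕ}
    (hk : k < (s.erase (s.max' hs)).card) :
    (s.sort (· ≤ ·)).getD k 0 = ((s.erase (s.max' hs)).sort (· ≤ ·)).getD k 0 := by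
  rw [sort_max_eq s hs]
  exact List.getD_append _ _ _ _ (by rwa [Finset.length_sort])

def plainProd (I J : Finset ℕ) (N M ℓ : ℕ) : ℕ :=
  ∏ k ∈ Finset.range (ℓ + 1),
    Nat.choose ((sortedPts I N).getD (k + 1) 0 - (sortedPts I N).getD k 0 - 1)
      ((sortedPts J M).getD (k + 1) 0 - (sortedPts J M).getD k 0 - 1)

lemma gapProd_eq_sq (I J : Finset ℕ) (N M ℓ : ℕ) :
    gapProd I J N M ℓ = (plainProd I J N M ℓ) ^ 2 := by
  rw [gapProd, plainProd, ← Finset.prod_pow]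

lemma sortedPts_length (s : Finset ℕ) (top : ℕ) :
    (sortedPts s top).length = s.card + 2 := by
  simp [sortedPts]

lemma sortedPts_step (s : Finset ℕ) (hs : s.Nonempty) (top : ℕ) (hm : 1 ≤ s.max' hs) :
    sortedPts s top = sortedPts (s.erase (s.max' hs)) (s.max' hs - 1) ++ [top + 1] := by
  unfold sortedPts
  rw [sort_max_eq s hs]
  have h1 : s.max' hs - 1 + 1 = s.max' hs := by omega
  rw [h1]
  simp

lemma plainProd_empty (N M : ℕ) : plainProd ∅ ∅ N M 0 = Nat.choose N M := by
  have : ∀ top : ℕ, sortedPts ∅ top = [0, top + 1] := by intro top; simp [sortedPts]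
  simp only [plainProd, Finset.prod_range_one, this]
  norm_num

lemma plainProd_step (I J : Finset ℕ) (N M ℓ : ℕ) (hI : I.Nonempty) (hJ : J.Nonempty)
    (hIc : I.card = ℓ + 1) (hJc : J.card = ℓ + 1)
    (hiN : I.max' hI ≤ N) (hi1 : 1 ≤ I.max' hI)
    (hjM : J.max' hJ ≤ M) (hj1 : 1 ≤ J.max' hJ) :
    plainProd I J N M (ℓ + 1) =
      plainProd (I.erase (I.max' hI)) (J.erase (J.max' hJ))
        (I.max' hI - 1) (J.max' hJ - 1) ℓ *
      Nat.choose (N - I.max' hI) (M - J.max' hJ) := by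
  set i := I.max' hI with hidef
  set j := J.max' hJ with hjdef
  have hIe : (I.erase i).card = ℓ := by have : (I.erase i).card = I.card - 1 := Finset.card_erase_of_mem (I.max'_mem hI); omega
  have hJe : (J.erase j).card = ℓ := by have : (J.erase j).card = J.card - 1 := Finset.card_erase_of_mem (J.max'_mem hJ); omega
  have hIlen : (sortedPts (I.erase i) (i - 1)).length = ℓ + 2 := by
    rw [sortedPts_length, hIe]
  have hJlen : (sortedPts (J.erase j) (j - 1)).length = ℓ + 2 := by
    rw [sortedPts_length, hJe]
  have hIs := sortedPts_step I hI N hi1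
  have hJs := sortedPts_step J hJ M hj1
  -- getD agreement for k < ℓ + 2
  have hIg : ∀ k < ℓ + 2, (sortedPts I N).getD k 0 = (sortedPts (I.erase i) (i - 1)).getD k 0 := by
    intro k hk
    rw [hIs]
    exact List.getD_append _ _ _ _ (by rw [hIlen]; omega)
  have hJg : ∀ k < ℓ + 2, (sortedPts J M).getD k 0 = (sortedPts (J.erase j) (j - 1)).getD k 0 := by
    intro k hk
    rw [hJs]
    exact List.getD_append _ _ _ _ (by rw [hJlen]; omega)
  -- the last entries
  have hIlast : (sortedPts I N).getD (ℓ + 2) 0 = N + 1 := by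
    rw [hIs, List.getD_append_right _ _ _ _ (le_of_eq hIlen), hIlen]
    simp
  have hJlast : (sortedPts J M).getD (ℓ + 2) 0 = M + 1 := by
    rw [hJs, List.getD_append_right _ _ _ _ (le_of_eq hJlen), hJlen]
    simp
  have hIl1 : (sortedPts (I.erase i) (i - 1)).getD (ℓ + 1) 0 = i := by
    unfold sortedPts
    rw [List.getD_append_right _ _ _ _ (by simp [hIe])]
    simp [hIe]
    omega
  have hJl1 : (sortedPts (J.erase j) (j - 1)).getD (ℓ + 1) 0 = j := by
    unfold sortedPts
    rw [List.getD_append_right _ _ _ _ (by simp [hJe])]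
    simp [hJe]
    omega
  rw [plainProd, Finset.prod_range_succ]
  congr 1
  · rw [plainProd]
    apply Finset.prod_congr rfl
    intro k hk
    rw [Finset.mem_range] at hk
    rw [hIg k (by omega), hIg (k+1) (by omega), hJg k (by omega), hJg (k+1) (by omega)]
  · rw [hIlast, hJlast, hIg (ℓ+1) (by omega), hJg (ℓ+1) (by omega), hIl1, hJl1]
    congr 1 <;> omega

def pinCond (A I J : Finset ℕ) : Prop :=
  ∀ k < J.card, ((I.sort (· ≤ ·)).getD k 0 ∈ A ∧
    (A.filter (· ≤ (I.sort (· ≤ ·)).getD k 0)).card = (J.sort (· ≤ ·)).getD k 0)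

instance (A I J : Finset ℕ) : Decidable (pinCond A I J) := by
  unfold pinCond; infer_instance

def pinSet (N M : ℕ) (I J : Finset ℕ) : Finset (Finset ℕ) :=
  (Finset.powersetCard M (Finset.Icc 1 N)).filter (fun A => pinCond A I J)

lemma pinSet_card_step (N M ℓ : ℕ) (I J : Finset ℕ) (hI : I.Nonempty) (hJ : J.Nonempty)
    (hIc : I.card = ℓ + 1) (hJc : J.card = ℓ + 1)
    (hIN : I ⊆ Finset.Icc 1 N) (hJM : J ⊆ Finset.Icc 1 M) :
    (pinSet N M I J).card =
      (pinSet (I.max' hI - 1) (J.max' hJ - 1) (I.erase (I.max' hI)) (J.erase (J.max' hJ))).card *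
        Nat.choose (N - I.max' hI) (M - J.max' hJ) := by
  set i := I.max' hI with hidef
  set j := J.max' hJ with hjdef
  obtain ⟨hi1, hiN⟩ := Finset.mem_Icc.1 (hIN (I.max'_mem hI))
  obtain ⟨hj1, hjM⟩ := Finset.mem_Icc.1 (hJM (J.max'_mem hJ))
  have hIe : (I.erase i).card = ℓ := by have : (I.erase i).card = I.card - 1 := Finset.card_erase_of_mem (I.max'_mem hI); omega
  have hJe : (J.erase j).card = ℓ := by have : (J.erase j).card = J.card - 1 := Finset.card_erase_of_mem (J.max'_mem hJ); omega
  have hIgl : (I.sort (· ≤ ·)).getD ℓ 0 = i := sort_getD_last I hI hIc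
  have hJgl : (J.sort (· ≤ ·)).getD ℓ 0 = j := sort_getD_last J hJ hJc
  have hIgk : ∀ k, k < ℓ → (I.sort (· ≤ ·)).getD k 0 = ((I.erase i).sort (· ≤ ·)).getD k 0 := by
    intro k hk; exact sort_getD_prefix I hI (by rwa [hIe])
  have hJgk : ∀ k, k < ℓ → (J.sort (· ≤ ·)).getD k 0 = ((J.erase j).sort (· ≤ ·)).getD k 0 := by
    intro k hk; exact sort_getD_prefix J hJ (by rwa [hJe])
  have hIlt : ∀ k, k < ℓ → ((I.erase i).sort (· ≤ ·)).getD k 0 < i := by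
    intro k hk
    have hmem := sort_getD_mem (I.erase i) k (by rwa [hIe])
    exact lt_of_le_of_ne (Finset.le_max' I _ (Finset.mem_of_mem_erase hmem))
      (Finset.ne_of_mem_erase hmem)
  have key : (pinSet N M I J).card =
      ((pinSet (i - 1) (j - 1) (I.erase i) (J.erase j)) ×ˢ
        (Finset.powersetCard (M - j) (Finset.Icc (i + 1) N))).card := by
    refine Finset.card_bij' (fun A _ => (A.filter (· < i), A.filter (i < ·)))
      (fun P _ => insert i (P.1 ∪ P.2)) ?_ ?_ ?_ ?_
    · -- forward membership
      intro A hA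
      rw [pinSet, Finset.mem_filter, Finset.mem_powersetCard] at hA
      obtain ⟨⟨hAs, hAc⟩, hpin⟩ := hA
      have hAb : ∀ x ∈ A, 1 ≤ x ∧ x ≤ N := fun x hx => Finset.mem_Icc.1 (hAs hx)
      obtain ⟨hiA, hcnt⟩ := hpin ℓ (by omega)
      rw [hIgl] at hiA
      rw [hIgl, hJgl] at hcnt
      have h1 : A.filter (· ≤ i) = insert i (A.filter (· < i)) := by
        ext x
        simp only [Finset.mem_filter, Finset.mem_insert]
        constructor
        · rintro ⟨hx, hxi⟩
          rcases eq_or_lt_of_le hxi with h | h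
          · exact Or.inl h
          · exact Or.inr ⟨hx, h⟩
        · rintro (rfl | ⟨hx, hxi⟩)
          · exact ⟨hiA, le_refl _⟩
          · exact ⟨hx, le_of_lt hxi⟩
      have hni : i ∉ A.filter (· < i) := by simp
      have card1 : (A.filter (· < i)).card = j - 1 := by
        rw [h1, Finset.card_insert_of_notMem hni] at hcnt
        omega
      have card2 : (A.filter (i < ·)).card = M - j := by
        have hpart := Finset.card_filter_add_card_filter_not (s := A) (p := (· ≤ i))
        have : A.filter (fun x => ¬ x ≤ i) = A.filter (i < ·) := by
          apply Finset.filter_congr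
          intro x _
          omega
        rw [this, hcnt, hAc] at hpart
        omega
      rw [Finset.mem_product]
      constructor
      · rw [pinSet, Finset.mem_filter, Finset.mem_powersetCard]
        refine ⟨⟨?_, card1⟩, ?_⟩
        · intro x hx
          rw [Finset.mem_filter] at hx
          rw [Finset.mem_Icc]
          have := hAb x hx.1
          have := hx.2
          omega
        · intro k hk
          rw [hJe] at hk
          obtain ⟨hk1, hk2⟩ := hpin k (by omega)
          rw [hIgk k hk] at hk1 hk2
          rw [hJgk k hk] at hk2
          refine ⟨Finset.mem_filter.2 ⟨hk1, hIlt k hk⟩, ?_⟩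
          rw [← hk2]
          congr 1
          rw [Finset.filter_filter]
          apply Finset.filter_congr
          intro x _
          have := hIlt k hk
          constructor
          · rintro ⟨_, h⟩; exact h
          · intro h; exact ⟨by omega, h⟩
      · rw [Finset.mem_powersetCard]
        refine ⟨?_, card2⟩
        intro x hx
        rw [Finset.mem_filter] at hx
        rw [Finset.mem_Icc]
        have := hAb x hx.1
        have := hx.2
        omega
    · -- backward membership
      rintro ⟨A₁, A₂⟩ hP
      rw [Finset.mem_product] at hP
      obtain ⟨hP1, hP2⟩ := hP
      rw [pinSet, Finset.mem_filter, Finset.mem_powersetCard] at hP1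
      rw [Finset.mem_powersetCard] at hP2
      obtain ⟨⟨hA1s, hA1c⟩, hp1⟩ := hP1
      obtain ⟨hA2s, hA2c⟩ := hP2
      have b1 : ∀ x ∈ A₁, 1 ≤ x ∧ x ≤ i - 1 := fun x hx => Finset.mem_Icc.1 (hA1s hx)
      have b2 : ∀ x ∈ A₂, i + 1 ≤ x ∧ x ≤ N := fun x hx => Finset.mem_Icc.1 (hA2s hx)
      have hiA1 : i ∉ A₁ := fun h => by have := b1 i h; omega
      have hiA2 : i ∉ A₂ := fun h => by have := b2 i h; omega
      have hdisj : Disjoint A₁ A₂ := by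
        rw [Finset.disjoint_left]
        intro x h1 h2
        have := b1 x h1
        have := b2 x h2
        omega
      have hBfilt : ∀ c : ℕ, c < i → (insert i (A₁ ∪ A₂)).filter (· ≤ c) = A₁.filter (· ≤ c) := by
        intro c hc
        ext x
        simp only [Finset.mem_filter, Finset.mem_insert, Finset.mem_union]
        constructor
        · rintro ⟨rfl | hx | hx, hxc⟩
          · omega
          · exact ⟨hx, hxc⟩
          · have := b2 x hx; omega
        · rintro ⟨hx, hxc⟩
          exact ⟨Or.inr (Or.inl hx), hxc⟩
      rw [pinSet, Finset.mem_filter, Finset.mem_powersetCard]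
      refine ⟨⟨?_, ?_⟩, ?_⟩
      · intro x hx
        rw [Finset.mem_insert, Finset.mem_union] at hx
        rw [Finset.mem_Icc]
        rcases hx with rfl | hx | hx
        · omega
        · have := b1 x hx; omega
        · have := b2 x hx; omega
      · rw [Finset.card_insert_of_notMem (by simp [hiA1, hiA2]),
          Finset.card_union_of_disjoint hdisj, hA1c, hA2c]
        omega
      · intro k hk
        rw [hJc] at hk
        rcases Nat.lt_or_ge k ℓ with hkl | hkl
        · -- k < ℓ
          rw [hIgk k hkl, hJgk k hkl]
          obtain ⟨hk1, hk2⟩ := hp1 k (by rwa [hJe])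
          refine ⟨Finset.mem_insert_of_mem (Finset.mem_union_left _ hk1), ?_⟩
          rw [hBfilt _ (hIlt k hkl), hk2]
        · -- k = ℓ
          have hkeq : k = ℓ := by omega
          subst hkeq
          rw [hIgl, hJgl]
          refine ⟨Finset.mem_insert_self _ _, ?_⟩
          have : (insert i (A₁ ∪ A₂)).filter (· ≤ i) = insert i A₁ := by
            ext x
            simp only [Finset.mem_filter, Finset.mem_insert, Finset.mem_union]
            constructor
            · rintro ⟨rfl | hx | hx, hxc⟩
              · exact Or.inl rfl
              · exact Or.inr hx
              · have := b2 x hx; omega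
            · rintro (rfl | hx)
              · exact ⟨Or.inl rfl, le_refl _⟩
              · have := b1 x hx
                exact ⟨Or.inr (Or.inl hx), by omega⟩
          rw [this, Finset.card_insert_of_notMem hiA1, hA1c]
          omega
    · -- left inverse
      intro A hA
      rw [pinSet, Finset.mem_filter, Finset.mem_powersetCard] at hA
      obtain ⟨⟨hAs, hAc⟩, hpin⟩ := hA
      obtain ⟨hiA, -⟩ := hpin ℓ (by omega)
      rw [hIgl] at hiA
      ext x
      simp only [Finset.mem_insert, Finset.mem_union, Finset.mem_filter]
      constructor
      · rintro (rfl | ⟨hx, -⟩ | ⟨hx, -⟩) <;> assumption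
      · intro hx
        rcases Nat.lt_trichotomy x i with h | h | h
        · exact Or.inr (Or.inl ⟨hx, h⟩)
        · exact Or.inl h
        · exact Or.inr (Or.inr ⟨hx, h⟩)
    · -- right inverse
      rintro ⟨A₁, A₂⟩ hP
      rw [Finset.mem_product] at hP
      obtain ⟨hP1, hP2⟩ := hP
      rw [pinSet, Finset.mem_filter, Finset.mem_powersetCard] at hP1
      rw [Finset.mem_powersetCard] at hP2
      obtain ⟨⟨hA1s, -⟩, -⟩ := hP1
      obtain ⟨hA2s, -⟩ := hP2
      have b1 : ∀ x ∈ A₁, 1 ≤ x ∧ x ≤ i - 1 := fun x hx => Finset.mem_Icc.1 (hA1s hx)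
      have b2 : ∀ x ∈ A₂, i + 1 ≤ x ∧ x ≤ N := fun x hx => Finset.mem_Icc.1 (hA2s hx)
      have e1 : (insert i (A₁ ∪ A₂)).filter (· < i) = A₁ := by
        ext x
        simp only [Finset.mem_filter, Finset.mem_insert, Finset.mem_union]
        constructor
        · rintro ⟨rfl | hx | hx, hxc⟩
          · omega
          · exact hx
          · have := b2 x hx; omega
        · intro hx
          have := b1 x hx
          exact ⟨Or.inr (Or.inl hx), by omega⟩
      have e2 : (insert i (A₁ ∪ A₂)).filter (i < ·) = A₂ := by
        ext x
        simp only [Finset.mem_filter, Finset.mem_insert, Finset.mem_union]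
        constructor
        · rintro ⟨rfl | hx | hx, hxc⟩
          · omega
          · have := b1 x hx; omega
          · exact hx
        · intro hx
          have := b2 x hx
          exact ⟨Or.inr (Or.inr hx), by omega⟩
      simp only [e1, e2]
  rw [key, Finset.card_product, Finset.card_powersetCard, Nat.card_Icc]
  congr 2
  omega

lemma pinSet_card (ℓ : ℕ) : ∀ N M : ℕ, ∀ I J : Finset ℕ,
    I ∈ Finset.powersetCard ℓ (Finset.Icc 1 N) → J ∈ Finset.powersetCard ℓ (Finset.Icc 1 M) →
    (pinSet N M I J).card = plainProd I J N M ℓ := by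
  induction ℓ with
  | zero =>
    intro N M I J hI hJ
    rw [Finset.mem_powersetCard] at hI hJ
    have hIe : I = ∅ := Finset.card_eq_zero.1 hI.2
    have hJe : J = ∅ := Finset.card_eq_zero.1 hJ.2
    subst hIe; subst hJe
    rw [plainProd_empty]
    have h0 : pinSet N M ∅ ∅ = Finset.powersetCard M (Finset.Icc 1 N) := by
      rw [pinSet]
      apply Finset.filter_true_of_mem
      intro A _ k hk
      simp at hk
    rw [h0, Finset.card_powersetCard, Nat.card_Icc]
    congr 1
  | succ ℓ ih =>
    intro N M I J hI hJ
    rw [Finset.mem_powersetCard] at hI hJ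
    obtain ⟨hIN, hIc⟩ := hI
    obtain ⟨hJM, hJc⟩ := hJ
    have hIne : I.Nonempty := Finset.card_pos.1 (by omega)
    have hJne : J.Nonempty := Finset.card_pos.1 (by omega)
    obtain ⟨hi1, hiN⟩ := Finset.mem_Icc.1 (hIN (I.max'_mem hIne))
    obtain ⟨hj1, hjM⟩ := Finset.mem_Icc.1 (hJM (J.max'_mem hJne))
    rw [pinSet_card_step N M ℓ I J hIne hJne hIc hJc hIN hJM]
    rw [plainProd_step I J N M ℓ hIne hJne hIc hJc hiN hi1 hjM hj1]
    congr 1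
    apply ih
    · rw [Finset.mem_powersetCard]
      refine ⟨?_, by simp [Finset.card_erase_of_mem (I.max'_mem hIne), hIc]⟩
      intro x hx
      rw [Finset.mem_Icc]
      have h1 := Finset.mem_Icc.1 (hIN (Finset.mem_of_mem_erase hx))
      have h2 := Finset.ne_of_mem_erase hx
      have h3 := Finset.le_max' I x (Finset.mem_of_mem_erase hx)
      omega
    · rw [Finset.mem_powersetCard]
      refine ⟨?_, by simp [Finset.card_erase_of_mem (J.max'_mem hJne), hJc]⟩
      intro x hx
      rw [Finset.mem_Icc]
      have h1 := Finset.mem_Icc.1 (hJM (Finset.mem_of_mem_erase hx))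
      have h2 := Finset.ne_of_mem_erase hx
      have h3 := Finset.le_max' J x (Finset.mem_of_mem_erase hx)
      omega

def fpinCond {N M : ℕ} (σ : Fin M → Fin N) (I J : Finset ℕ) : Prop :=
  ∀ t : Fin M, ∀ k, k < J.card → (t : ℕ) + 1 = (J.sort (· ≤ ·)).getD k 0 →
    (σ t : ℕ) + 1 = (I.sort (· ≤ ·)).getD k 0

instance {N M : ℕ} (σ : Fin M → Fin N) (I J : Finset ℕ) : Decidable (fpinCond σ I J) := by
  unfold fpinCond; infer_instance

instance {N M : ℕ} (σ : Fin M → Fin N) : Decidable (StrictMono σ) := by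
  unfold StrictMono; infer_instance

/-- The value set of `σ`, shifted up by one. -/
def fimg {N M : ℕ} (σ : Fin M → Fin N) : Finset ℕ :=
  Finset.image (fun t => (σ t : ℕ) + 1) Finset.univ

lemma fimg_inj {N M : ℕ} (σ : Fin M → Fin N) (hσ : StrictMono σ) :
    Function.Injective (fun t : Fin M => (σ t : ℕ) + 1) := by
  intro a b hab
  simp only [add_left_inj] at hab
  exact hσ.injective (Fin.val_injective hab)

lemma fimg_mem {N M : ℕ} (σ : Fin M → Fin N) (hσ : StrictMono σ) :
    fimg σ ∈ Finset.powersetCard M (Finset.Icc 1 N) := by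
  rw [Finset.mem_powersetCard]
  constructor
  · intro x hx
    rw [fimg, Finset.mem_image] at hx
    obtain ⟨t, -, rfl⟩ := hx
    have := (σ t).2
    rw [Finset.mem_Icc]
    omega
  · rw [fimg, Finset.card_image_of_injective _ (fimg_inj σ hσ), Finset.card_univ,
      Fintype.card_fin]

lemma fimg_count {N M : ℕ} (σ : Fin M → Fin N) (hσ : StrictMono σ) (t : Fin M) :
    ((fimg σ).filter (· ≤ (σ t : ℕ) + 1)).card = (t : ℕ) + 1 := by
  rw [fimg, Finset.filter_image]
  have h1 : (Finset.univ.filter fun u : Fin M => (σ u : ℕ) + 1 ≤ (σ t : ℕ) + 1)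
      = Finset.univ.filter (· ≤ t) := by
    apply Finset.filter_congr
    intro u _
    have h2 : (σ u : ℕ) + 1 ≤ (σ t : ℕ) + 1 ↔ σ u ≤ σ t := by
      rw [Fin.le_def]; omega
    rw [h2, hσ.le_iff_le]
  rw [h1, Finset.card_image_of_injective _ (fimg_inj σ hσ),
    show (Finset.univ.filter (· ≤ t)) = Finset.Iic t by ext x; simp, Fin.card_Iic]

lemma count_injOn {A : Finset ℕ} {a b : ℕ} (ha : a ∈ A) (hb : b ∈ A)
    (h : (A.filter (· ≤ a)).card = (A.filter (· ≤ b)).card) : a = b := by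
  by_contra hne
  have key : ∀ x y : ℕ, x ∈ A → y ∈ A → x < y →
      (A.filter (· ≤ x)).card < (A.filter (· ≤ y)).card := by
    intro x y hx hy hxy
    apply Finset.card_lt_card
    constructor
    · intro z hz
      rw [Finset.mem_filter] at hz ⊢
      exact ⟨hz.1, le_trans hz.2 hxy.le⟩
    · intro hsub
      have := hsub (Finset.mem_filter.2 ⟨hy, le_refl y⟩)
      rw [Finset.mem_filter] at this
      omega
  rcases Nat.lt_or_ge a b with hlt | hge
  · exact absurd h (Nat.ne_of_lt (key a b ha hb hlt))
  · have : b < a := by omega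
    exact absurd h.symm (Nat.ne_of_lt (key b a hb ha this))

lemma fpin_iff_pin {N M : ℕ} (σ : Fin M → Fin N) (hσ : StrictMono σ) (I J : Finset ℕ)
    (hJM : J ⊆ Finset.Icc 1 M) :
    fpinCond σ I J ↔ pinCond (fimg σ) I J := by
  constructor
  · intro hf k hk
    have hjk := sort_getD_mem J k hk
    obtain ⟨hj1, hjM'⟩ := Finset.mem_Icc.1 (hJM hjk)
    set t : Fin M := ⟨(J.sort (· ≤ ·)).getD k 0 - 1, by omega⟩ with ht
    have ht1 : (t : ℕ) + 1 = (J.sort (· ≤ ·)).getD k 0 := by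
      rw [ht]
      simp only [Fin.val_mk]
      omega
    have hval := hf t k hk ht1
    constructor
    · rw [← hval, fimg]
      exact Finset.mem_image_of_mem _ (Finset.mem_univ t)
    · rw [← hval, fimg_count σ hσ t, ht1]
  · intro hp t k hk ht1
    obtain ⟨hmem, hcnt⟩ := hp k hk
    rw [fimg, Finset.mem_image] at hmem
    obtain ⟨u, -, hu⟩ := hmem
    rw [← hu] at hcnt
    rw [fimg_count σ hσ u] at hcnt
    have : u = t := by
      apply Fin.val_injective
      omega
    rw [← hu, this]

lemma fimg_injective {N M : ℕ} (σ τ : Fin M → Fin N) (hσ : StrictMono σ) (hτ : StrictMono τ)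
    (h : fimg σ = fimg τ) : σ = τ := by
  funext t
  have h1 : (σ t : ℕ) + 1 ∈ fimg τ := by
    rw [← h, fimg]; exact Finset.mem_image_of_mem _ (Finset.mem_univ t)
  rw [fimg, Finset.mem_image] at h1
  obtain ⟨u, -, hu⟩ := h1
  have hu' : (τ u : ℕ) + 1 = (σ t : ℕ) + 1 := hu
  have c1 : ((fimg τ).filter (· ≤ (σ t : ℕ) + 1)).card = (t : ℕ) + 1 := by
    rw [← h, fimg_count σ hσ t]
  rw [← hu, fimg_count τ hτ u] at c1
  have : u = t := Fin.val_injective (by omega)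
  apply Fin.val_injective
  rw [this] at hu'
  omega

lemma fimg_surjective {N M : ℕ} (A : Finset ℕ)
    (hA : A ∈ Finset.powersetCard M (Finset.Icc 1 N)) :
    ∃ σ : Fin M → Fin N, StrictMono σ ∧ fimg σ = A := by
  rw [Finset.mem_powersetCard] at hA
  obtain ⟨hAs, hAc⟩ := hA
  have hmem : ∀ t : Fin M, (A.sort (· ≤ ·)).getD t 0 ∈ A := by
    intro t
    exact sort_getD_mem A t (by rw [hAc]; exact t.2)
  have hbd : ∀ t : Fin M, 1 ≤ (A.sort (· ≤ ·)).getD t 0 ∧ (A.sort (· ≤ ·)).getD t 0 ≤ N := by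
    intro t
    exact Finset.mem_Icc.1 (hAs (hmem t))
  refine ⟨fun t => ⟨(A.sort (· ≤ ·)).getD t 0 - 1, by have := hbd t; omega⟩, ?_, ?_⟩
  · intro a b hab
    have hlen : ∀ t : Fin M, (t : ℕ) < (A.sort (· ≤ ·)).length := by
      intro t; rw [Finset.length_sort, hAc]; exact t.2
    have hgd : ∀ t : Fin M, (A.sort (· ≤ ·)).getD t 0 = (A.sort (· ≤ ·)).get ⟨t, hlen t⟩ := by
      intro t
      rw [List.getD_eq_getElem _ _ (hlen t)]
      rfl
    have hsm := (show StrictMono (A.sort (· ≤ ·)).get from Finset.sortedLT_sort A)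
      (a := ⟨a, hlen a⟩) (b := ⟨b, hlen b⟩) (by exact hab)
    rw [Fin.lt_def]
    simp only []
    rw [hgd a, hgd b]
    have h1 := (hbd a).1
    rw [hgd a] at h1
    omega
  · rw [fimg]
    apply Finset.Subset.antisymm
    · intro x hx
      rw [Finset.mem_image] at hx
      obtain ⟨t, -, rfl⟩ := hx
      simp only []
      have := hbd t
      have h2 : (A.sort (· ≤ ·)).getD t 0 - 1 + 1 = (A.sort (· ≤ ·)).getD t 0 := by omega
      rw [h2]
      exact hmem t
    · intro x hx
      have hx' : x ∈ A.sort (· ≤ ·) := (Finset.mem_sort _).2 hx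
      rw [List.mem_iff_getElem] at hx'
      obtain ⟨n, hn, hval⟩ := hx'
      have hnM : n < M := by rwa [Finset.length_sort, hAc] at hn
      rw [Finset.mem_image]
      refine ⟨⟨n, hnM⟩, Finset.mem_univ _, ?_⟩
      simp only []
      have hg : (A.sort (· ≤ ·)).getD n 0 = x := by
        rw [List.getD_eq_getElem _ _ hn, hval]
      rw [hg]
      have := hbd ⟨n, hnM⟩
      rw [hg] at this
      omega

lemma sort_image_mono {M : ℕ} (S : Finset (Fin M)) (f : Fin M → ℕ) (hf : StrictMono f) :
    (S.image f).sort (· ≤ ·) = (S.sort (· ≤ ·)).map f := by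
  refine (fun hp h1 h2 => List.Perm.eq_of_pairwise' (r := (· ≤ ·)) h1 h2 hp) ?_ ?_ ?_
  · rw [← Multiset.coe_eq_coe]
    rw [Finset.sort_eq, Finset.image_val, Multiset.dedup_eq_self.2 (S.nodup.map hf.injective)]
    rw [← Finset.sort_eq S (fun x1 x2 => x1 ≤ x2)]
    rfl
  · exact Finset.pairwise_sort _ _
  · exact List.Pairwise.map f (fun a b hab => hf.monotone hab) (Finset.pairwise_sort _ _)

lemma sort_image_getElem {M : ℕ} (S : Finset (Fin M)) (f : Fin M → ℕ) (hf : StrictMono f)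
    (k : ℕ) (hk : k < S.card) :
    ((S.image f).sort (· ≤ ·)).getD k 0
      = f ((S.sort (· ≤ ·))[k]'(by rwa [Finset.length_sort])) := by
  have hlen2 : k < ((S.sort (· ≤ ·)).map f).length := by
    rw [List.length_map, Finset.length_sort]; exact hk
  rw [sort_image_mono S f hf, List.getD_eq_getElem _ _ hlen2, List.getElem_map]

lemma fpin_card (N M ℓ : ℕ) (I J : Finset ℕ)
    (hJ : J ∈ Finset.powersetCard ℓ (Finset.Icc 1 M)) :
    (Finset.univ.filter fun σ : Fin M → Fin N => StrictMono σ ∧ fpinCond σ I J).card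
      = (pinSet N M I J).card := by
  have hJM : J ⊆ Finset.Icc 1 M := (Finset.mem_powersetCard.1 hJ).1
  apply Finset.card_bij (fun σ _ => fimg σ)
  · intro σ hσ
    rw [Finset.mem_filter] at hσ
    obtain ⟨-, hm, hp⟩ := hσ
    rw [pinSet, Finset.mem_filter]
    exact ⟨fimg_mem σ hm, (fpin_iff_pin σ hm I J hJM).1 hp⟩
  · intro σ hσ τ hτ h
    rw [Finset.mem_filter] at hσ hτ
    exact fimg_injective σ τ hσ.2.1 hτ.2.1 h
  · intro A hA
    rw [pinSet, Finset.mem_filter] at hA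
    obtain ⟨σ, hm, hfe⟩ := fimg_surjective A hA.1
    refine ⟨σ, ?_, hfe⟩
    rw [Finset.mem_filter]
    refine ⟨Finset.mem_univ _, hm, ?_⟩
    rw [fpin_iff_pin σ hm I J hJM, hfe]
    exact hA.2

lemma plus_one_strictMono {M : ℕ} : StrictMono (fun t : Fin M => (t : ℕ) + 1) := by
  intro a b hab
  simp only [add_lt_add_iff_right]
  exact hab

lemma sigma_plus_one_strictMono {N M : ℕ} (σ : Fin M → Fin N) (hσ : StrictMono σ) :
    StrictMono (fun t : Fin M => (σ t : ℕ) + 1) := by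
  intro a b hab
  simp only [add_lt_add_iff_right]
  exact hσ hab

lemma sort_eq_iff {s t : Finset ℕ} (h : s.sort (· ≤ ·) = t.sort (· ≤ ·)) : s = t := by
  ext x
  rw [← Finset.mem_sort (α := ℕ) (· ≤ ·), h, Finset.mem_sort]

lemma fpin_unique {N M : ℕ} (σ : Fin M → Fin N) (hσ : StrictMono σ) (S : Finset (Fin M))
    (I : Finset ℕ) (hIc : I.card = S.card) :
    fpinCond σ I (S.image (fun t : Fin M => (t : ℕ) + 1)) ↔
      I = S.image (fun t : Fin M => (σ t : ℕ) + 1) := by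
  have hJc : (S.image fun t : Fin M => (t : ℕ) + 1).card = S.card :=
    Finset.card_image_of_injective _ plus_one_strictMono.injective
  have hIsc : (S.image fun t : Fin M => (σ t : ℕ) + 1).card = S.card :=
    Finset.card_image_of_injective _ (sigma_plus_one_strictMono σ hσ).injective
  have hslen : (S.sort (· ≤ ·)).length = S.card := Finset.length_sort _
  constructor
  · intro hfp
    have hlists : I.sort (· ≤ ·) = (S.image fun t : Fin M => (σ t : ℕ) + 1).sort (· ≤ ·) := by
      apply List.ext_getElem
      · rw [Finset.length_sort, Finset.length_sort, hIc, hIsc]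
      · intro n h1 h2
        rw [Finset.length_sort, hIc] at h1
        have ht1 : (((S.sort (· ≤ ·))[n]'(by omega) : Fin M) : ℕ) + 1
            = ((S.image fun t : Fin M => (t : ℕ) + 1).sort (· ≤ ·)).getD n 0 := by
          rw [sort_image_getElem S _ plus_one_strictMono n h1]
        have := hfp ((S.sort (· ≤ ·))[n]'(by omega)) n (by rwa [hJc]) ht1
        rw [← List.getD_eq_getElem _ 0, ← List.getD_eq_getElem _ 0, ← this,
          sort_image_getElem S _ (sigma_plus_one_strictMono σ hσ) n h1]
    exact sort_eq_iff hlists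
  · rintro rfl
    intro t k hk ht1
    rw [hJc] at hk
    rw [sort_image_getElem S _ plus_one_strictMono k hk] at ht1
    have ht : t = (S.sort (· ≤ ·))[k]'(by omega) := Fin.val_injective (by omega)
    rw [sort_image_getElem S _ (sigma_plus_one_strictMono σ hσ) k hk, ht]

lemma agree_iff {N M : ℕ} (σ τ : Fin M → Fin N) (hσ : StrictMono σ) (hτ : StrictMono τ)
    (S : Finset (Fin M)) :
    (∀ t ∈ S, σ t = τ t) ↔
      S.image (fun t : Fin M => (σ t : ℕ) + 1) = S.image (fun t : Fin M => (τ t : ℕ) + 1) := by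
  constructor
  · intro h
    apply Finset.image_congr
    intro t ht
    dsimp only
    rw [h t ht]
  · intro h t ht
    have ht' : t ∈ S.sort (· ≤ ·) := (Finset.mem_sort _).2 ht
    rw [List.mem_iff_getElem] at ht'
    obtain ⟨n, hn, hval⟩ := ht'
    have hnc : n < S.card := by rwa [Finset.length_sort] at hn
    have h1 := sort_image_getElem S _ (sigma_plus_one_strictMono σ hσ) n hnc
    have h2 := sort_image_getElem S _ (sigma_plus_one_strictMono τ hτ) n hnc
    rw [h] at h1
    rw [h1] at h2
    rw [hval] at h2
    exact Fin.val_injective (by omega)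

lemma img_mem_powersetCard {N M : ℕ} (σ : Fin M → Fin N) (hσ : StrictMono σ)
    (S : Finset (Fin M)) :
    S.image (fun t : Fin M => (σ t : ℕ) + 1) ∈ Finset.powersetCard S.card (Finset.Icc 1 N) := by
  rw [Finset.mem_powersetCard]
  constructor
  · intro x hx
    rw [Finset.mem_image] at hx
    obtain ⟨t, -, rfl⟩ := hx
    have := (σ t).2
    rw [Finset.mem_Icc]
    omega
  · exact Finset.card_image_of_injective _ (sigma_plus_one_strictMono σ hσ).injective

lemma js_mem_powersetCard {M : ℕ} (S : Finset (Fin M)) :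
    S.image (fun t : Fin M => (t : ℕ) + 1) ∈ Finset.powersetCard S.card (Finset.Icc 1 M) := by
  rw [Finset.mem_powersetCard]
  refine ⟨?_, Finset.card_image_of_injective _ plus_one_strictMono.injective⟩
  intro x hx
  rw [Finset.mem_image] at hx
  obtain ⟨t, -, rfl⟩ := hx
  have := t.2
  rw [Finset.mem_Icc]
  omega

lemma ite_and_mul (p q : Prop) [Decidable p] [Decidable q] :
    (if p ∧ q then (1:ℕ) else 0) = (if p then 1 else 0) * (if q then 1 else 0) := by
  by_cases hp : p <;> by_cases hq : q <;> simp [hp, hq]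

lemma pair_count (N M : ℕ) (S : Finset (Fin M)) :
    (∑ σ : Fin M → Fin N, ∑ τ : Fin M → Fin N,
      if StrictMono σ ∧ StrictMono τ ∧ (∀ t ∈ S, σ t = τ t) then 1 else 0)
    = ∑ I ∈ Finset.powersetCard S.card (Finset.Icc 1 N),
        ((Finset.univ.filter fun σ : Fin M → Fin N =>
          StrictMono σ ∧ fpinCond σ I (S.image (fun t : Fin M => (t : ℕ) + 1))).card) ^ 2 := by
  have key : ∀ σ τ : Fin M → Fin N,
      (if StrictMono σ ∧ StrictMono τ ∧ (∀ t ∈ S, σ t = τ t) then (1:ℕ) else 0)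
      = ∑ I ∈ Finset.powersetCard S.card (Finset.Icc 1 N),
          if (StrictMono σ ∧ fpinCond σ I (S.image (fun t : Fin M => (t : ℕ) + 1)))
            ∧ (StrictMono τ ∧ fpinCond τ I (S.image (fun t : Fin M => (t : ℕ) + 1))) then 1
          else 0 := by
    intro σ τ
    by_cases hσ : StrictMono σ
    · by_cases hτ : StrictMono τ
      · by_cases hagree : ∀ t ∈ S, σ t = τ t
        · rw [if_pos ⟨hσ, hτ, hagree⟩]
          have hIτσ : S.image (fun t : Fin M => (σ t : ℕ) + 1)
              = S.image (fun t : Fin M => (τ t : ℕ) + 1) :=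
            (agree_iff σ τ hσ hτ S).1 hagree
          have hpt : ∀ I ∈ Finset.powersetCard S.card (Finset.Icc 1 N),
              (if (StrictMono σ ∧ fpinCond σ I (S.image (fun t : Fin M => (t : ℕ) + 1)))
                ∧ (StrictMono τ ∧ fpinCond τ I (S.image (fun t : Fin M => (t : ℕ) + 1))) then (1:ℕ)
              else 0)
              = if I = S.image (fun t : Fin M => (σ t : ℕ) + 1) then 1 else 0 := by
            intro I hI
            have hIc : I.card = S.card := (Finset.mem_powersetCard.1 hI).2
            apply if_congr _ rfl rfl
            rw [fpin_unique σ hσ S I hIc, fpin_unique τ hτ S I hIc, ← hIτσ]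
            constructor
            · rintro ⟨⟨-, h1⟩, -⟩; exact h1
            · rintro rfl; exact ⟨⟨hσ, rfl⟩, ⟨hτ, rfl⟩⟩
          rw [Finset.sum_congr rfl hpt,
            Finset.sum_ite_eq' _ (S.image (fun t : Fin M => (σ t : ℕ) + 1)) (fun _ => (1:ℕ)),
            if_pos (img_mem_powersetCard σ hσ S)]
        · rw [if_neg (by tauto), eq_comm]
          apply Finset.sum_eq_zero
          intro I hI
          have hIc : I.card = S.card := (Finset.mem_powersetCard.1 hI).2
          rw [if_neg]
          rintro ⟨⟨-, h1⟩, ⟨-, h2⟩⟩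
          rw [fpin_unique σ hσ S I hIc] at h1
          rw [fpin_unique τ hτ S I hIc] at h2
          apply hagree
          rw [agree_iff σ τ hσ hτ S, ← h1, ← h2]
      · rw [if_neg (by tauto), eq_comm]
        apply Finset.sum_eq_zero
        intro I hI
        rw [if_neg (by tauto)]
    · rw [if_neg (by tauto), eq_comm]
      apply Finset.sum_eq_zero
      intro I hI
      rw [if_neg (by tauto)]
  calc (∑ σ : Fin M → Fin N, ∑ τ : Fin M → Fin N,
      if StrictMono σ ∧ StrictMono τ ∧ (∀ t ∈ S, σ t = τ t) then 1 else 0)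
      = ∑ σ : Fin M → Fin N, ∑ τ : Fin M → Fin N,
          ∑ I ∈ Finset.powersetCard S.card (Finset.Icc 1 N),
          if (StrictMono σ ∧ fpinCond σ I (S.image (fun t : Fin M => (t : ℕ) + 1)))
            ∧ (StrictMono τ ∧ fpinCond τ I (S.image (fun t : Fin M => (t : ℕ) + 1))) then 1
          else 0 := by
        apply Finset.sum_congr rfl; intro σ _
        apply Finset.sum_congr rfl; intro τ _
        exact key σ τ
    _ = ∑ I ∈ Finset.powersetCard S.card (Finset.Icc 1 N),
          ∑ σ : Fin M → Fin N, ∑ τ : Fin M → Fin N,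
          if (StrictMono σ ∧ fpinCond σ I (S.image (fun t : Fin M => (t : ℕ) + 1)))
            ∧ (StrictMono τ ∧ fpinCond τ I (S.image (fun t : Fin M => (t : ℕ) + 1))) then 1
          else 0 := by
        rw [Finset.sum_congr rfl (fun (σ : Fin M → Fin N) (_ : σ ∈ Finset.univ) =>
          Finset.sum_comm (γ := Fin M → Fin N) (α := Finset ℕ))]
        exact Finset.sum_comm
    _ = ∑ I ∈ Finset.powersetCard S.card (Finset.Icc 1 N),
        ((Finset.univ.filter fun σ : Fin M → Fin N =>
          StrictMono σ ∧ fpinCond σ I (S.image (fun t : Fin M => (t : ℕ) + 1))).card) ^ 2 := by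
        apply Finset.sum_congr rfl; intro I _
        have h1 : ∀ σ τ : Fin M → Fin N,
            (if (StrictMono σ ∧ fpinCond σ I (S.image (fun t : Fin M => (t : ℕ) + 1)))
              ∧ (StrictMono τ ∧ fpinCond τ I (S.image (fun t : Fin M => (t : ℕ) + 1))) then (1:ℕ)
            else 0)
            = (if StrictMono σ ∧ fpinCond σ I (S.image (fun t : Fin M => (t : ℕ) + 1)) then 1 else 0)
              * (if StrictMono τ ∧ fpinCond τ I (S.image (fun t : Fin M => (t : ℕ) + 1)) then 1 else 0) :=
          fun σ τ => ite_and_mul _ _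
        calc (∑ σ : Fin M → Fin N, ∑ τ : Fin M → Fin N,
            if (StrictMono σ ∧ fpinCond σ I (S.image (fun t : Fin M => (t : ℕ) + 1)))
              ∧ (StrictMono τ ∧ fpinCond τ I (S.image (fun t : Fin M => (t : ℕ) + 1))) then 1
            else 0)
            = (∑ σ : Fin M → Fin N,
                if StrictMono σ ∧ fpinCond σ I (S.image (fun t : Fin M => (t : ℕ) + 1)) then 1 else 0)
              * (∑ τ : Fin M → Fin N,
                if StrictMono τ ∧ fpinCond τ I (S.image (fun t : Fin M => (t : ℕ) + 1)) then 1 else 0) := by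
              rw [Finset.sum_mul_sum]
              apply Finset.sum_congr rfl; intro σ _
              apply Finset.sum_congr rfl; intro τ _
              exact h1 σ τ
          _ = ((Finset.univ.filter fun σ : Fin M → Fin N =>
                StrictMono σ ∧ fpinCond σ I (S.image (fun t : Fin M => (t : ℕ) + 1))).card) ^ 2 := by
              rw [← Finset.card_filter, sq]

open Classical in
lemma overlapSum_eq (N M : ℕ) :
    overlapSum N M = ∑ S : Finset (Fin M), ∑ σ : Fin M → Fin N, ∑ τ : Fin M → Fin N,
      if StrictMono σ ∧ StrictMono τ ∧ (∀ t ∈ S, σ t = τ t) then 1 else 0 := by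
  rw [overlapSum]
  have key : ∀ σ τ : Fin M → Fin N,
      (if StrictMono σ ∧ StrictMono τ then
        2 ^ (Finset.univ.filter fun j => σ j = τ j).card else 0)
      = ∑ S : Finset (Fin M),
          if StrictMono σ ∧ StrictMono τ ∧ (∀ t ∈ S, σ t = τ t) then 1 else 0 := by
    intro σ τ
    by_cases h : StrictMono σ ∧ StrictMono τ
    · rw [if_pos h]
      have hT : Finset.univ.filter (fun S : Finset (Fin M) => ∀ t ∈ S, σ t = τ t)
          = (Finset.univ.filter fun j => σ j = τ j).powerset := by
        ext S
        simp [Finset.mem_powerset, Finset.subset_iff]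
      calc (2:ℕ) ^ (Finset.univ.filter fun j => σ j = τ j).card
          = (Finset.univ.filter fun j : Fin M => σ j = τ j).powerset.card :=
            (Finset.card_powerset _).symm
        _ = (Finset.univ.filter (fun S : Finset (Fin M) => ∀ t ∈ S, σ t = τ t)).card := by
            rw [hT]
        _ = ∑ S : Finset (Fin M), if (∀ t ∈ S, σ t = τ t) then 1 else 0 :=
            Finset.card_filter _ _
        _ = ∑ S : Finset (Fin M),
              if StrictMono σ ∧ StrictMono τ ∧ (∀ t ∈ S, σ t = τ t) then 1 else 0 := by
            apply Finset.sum_congr rfl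
            intro S _
            apply if_congr _ rfl rfl
            exact ⟨fun ha => ⟨h.1, h.2, ha⟩, fun ha => ha.2.2⟩
    · rw [if_neg h, eq_comm]
      apply Finset.sum_eq_zero
      intro S _
      rw [if_neg (by tauto)]
  calc (∑ σ : Fin M → Fin N, ∑ τ : Fin M → Fin N,
      if StrictMono σ ∧ StrictMono τ then
        2 ^ (Finset.univ.filter fun j => σ j = τ j).card else 0)
      = ∑ σ : Fin M → Fin N, ∑ τ : Fin M → Fin N, ∑ S : Finset (Fin M),
          if StrictMono σ ∧ StrictMono τ ∧ (∀ t ∈ S, σ t = τ t) then 1 else 0 := by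
        apply Finset.sum_congr rfl; intro σ _
        apply Finset.sum_congr rfl; intro τ _
        exact key σ τ
    _ = ∑ S : Finset (Fin M), ∑ σ : Fin M → Fin N, ∑ τ : Fin M → Fin N,
          if StrictMono σ ∧ StrictMono τ ∧ (∀ t ∈ S, σ t = τ t) then 1 else 0 := by
        rw [Finset.sum_congr rfl (fun (σ : Fin M → Fin N) (_ : σ ∈ Finset.univ) =>
          Finset.sum_comm (γ := Fin M → Fin N) (α := Finset (Fin M)))]
        exact Finset.sum_comm

/-- Gap product formula:
`Σ_{σ,τ ∈ Σ_{N,M}} 2^{⟨σ,τ⟩} = Σ_{ℓ=0}^{M} Σ_{1≤j_1<⋯<j_ℓ≤M} Σ_{1≤i_1<⋯<i_ℓ≤N}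
Π_{k=1}^{ℓ+1} binom(i_k - i_{k-1} - 1, j_k - j_{k-1} - 1)²`. -/
theorem gap_product_formula (N M : ℕ) (hM : 1 ≤ M) (hMN : M ≤ N) :
    overlapSum N M =
      ∑ ℓ ∈ Finset.range (M + 1),
        ∑ J ∈ Finset.powersetCard ℓ (Finset.Icc 1 M),
          ∑ I ∈ Finset.powersetCard ℓ (Finset.Icc 1 N),
            gapProd I J N M ℓ := by
  
  rw [overlapSum_eq]
  calc (∑ S : Finset (Fin M), ∑ σ : Fin M → Fin N, ∑ τ : Fin M → Fin N,
      if StrictMono σ ∧ StrictMono τ ∧ (∀ t ∈ S, σ t = τ t) then 1 else 0)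
      = ∑ S : Finset (Fin M), ∑ I ∈ Finset.powersetCard S.card (Finset.Icc 1 N),
          gapProd I (S.image (fun t : Fin M => (t : ℕ) + 1)) N M S.card := by
        apply Finset.sum_congr rfl
        intro S _
        rw [pair_count N M S]
        apply Finset.sum_congr rfl
        intro I hI
        rw [fpin_card N M S.card I _ (js_mem_powersetCard S),
          pinSet_card S.card N M I _ hI (js_mem_powersetCard S), ← gapProd_eq_sq]
    _ = ∑ J ∈ (Finset.Icc 1 M).powerset,
          ∑ I ∈ Finset.powersetCard J.card (Finset.Icc 1 N), gapProd I J N M J.card := by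
        apply Finset.sum_nbij' (fun S => S.image (fun t : Fin M => (t : ℕ) + 1))
          (fun J => Finset.univ.filter (fun t : Fin M => (t : ℕ) + 1 ∈ J))
        · intro S _
          exact Finset.mem_powerset.2 (Finset.mem_powersetCard.1 (js_mem_powersetCard S)).1
        · intro J _
          exact Finset.mem_univ _
        · intro S _
          ext t
          simp only [Finset.mem_filter, Finset.mem_univ, true_and, Finset.mem_image]
          constructor
          · rintro ⟨u, hu, huv⟩
            have : u = t := Fin.val_injective (by omega)
            rwa [← this]
          · intro ht
            exact ⟨t, ht, rfl⟩
        · intro J hJ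
          rw [Finset.mem_powerset] at hJ
          ext x
          simp only [Finset.mem_image, Finset.mem_filter, Finset.mem_univ, true_and]
          constructor
          · rintro ⟨t, ht, rfl⟩
            exact ht
          · intro hx
            obtain ⟨hx1, hx2⟩ := Finset.mem_Icc.1 (hJ hx)
            refine ⟨⟨x - 1, by omega⟩, ?_, ?_⟩
            · simp only [Fin.val_mk]
              have : x - 1 + 1 = x := by omega
              rwa [this]
            · simp only [Fin.val_mk]
              omega
        · intro S _
          rw [Finset.card_image_of_injective _ plus_one_strictMono.injective]
    _ = ∑ ℓ ∈ Finset.range (M + 1), ∑ J ∈ Finset.powersetCard ℓ (Finset.Icc 1 M),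
          ∑ I ∈ Finset.powersetCard J.card (Finset.Icc 1 N), gapProd I J N M J.card := by
        rw [Finset.sum_powerset]
        have hc : (Finset.Icc 1 M).card = M := by rw [Nat.card_Icc]; omega
        rw [hc]
    _ = ∑ ℓ ∈ Finset.range (M + 1), ∑ J ∈ Finset.powersetCard ℓ (Finset.Icc 1 M),
          ∑ I ∈ Finset.powersetCard ℓ (Finset.Icc 1 N), gapProd I J N M ℓ := by
        apply Finset.sum_congr rfl
        intro ℓ _
        apply Finset.sum_congr rfl
        intro J hJ
        rw [(Finset.mem_powersetCard.1 hJ).2]
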